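/- Let E : Ordinal → Set ℂ be an ordinal-indexed family of subsets of ℂ such that E 0 is compact, countable and nonempty; for every ordinal α, E (α+1) = { x ∈ E α : x is an accumulation point of E α } (i.e., the set of points of E α that are not isolated in E α); and for every nonzero limit ordinal λ, E λ = ⋂_{β < λ} E β. Then there exists an ordinal α such that E α is finite and nonempty and E (α+1) = ∅. -/

import Mathlib

open Set Metric

/-- The transfinite Cantor–Bendixson process applied to a nonempty
countable compact set `E 0 ⊆ ℂ` reaches a finite nonempty stage whose derived set is
empty. -/
theorem cantor_bendixson_terminates (E : Ordinal → Set ℂ)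
    (hcomp : IsCompact (E 0)) (hcount : (E 0).Countable) (hne : (E 0).Nonempty)
    (hsucc : ∀ α : Ordinal,
      E (α + 1) = {x ∈ E α | ∀ ε > 0, ∃ y ∈ E α, y ≠ x ∧ dist y x < ε})
    (hlim : ∀ lam : Ordinal, Order.IsSuccLimit lam → E lam = ⋂ β < lam, E β) :
    ∃ α : Ordinal, (E α).Finite ∧ (E α).Nonempty ∧ E (α + 1) = ∅ := by
  classical
  -- the successor stage is the intersection with the derived set
  have hacc : ∀ α, E (α + 1) = E α ∩ derivedSet (E α) := by
    intro α
    rw [hsucc α]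
    ext x
    simp only [mem_sep_iff, mem_inter_iff, mem_derivedSet, accPt_iff_nhds]
    constructor
    · rintro ⟨hx, h⟩
      refine ⟨hx, fun U hU => ?_⟩
      obtain ⟨ε, εpos, hball⟩ := Metric.mem_nhds_iff.1 hU
      obtain ⟨y, hy, hyx, hd⟩ := h ε εpos
      exact ⟨y, ⟨hball (by simpa [Metric.mem_ball] using hd), hy⟩, hyx⟩
    · rintro ⟨hx, h⟩
      refine ⟨hx, fun ε εpos => ?_⟩
      obtain ⟨y, ⟨hyU, hyC⟩, hyx⟩ := h (Metric.ball x ε) (Metric.ball_mem_nhds x εpos)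
      exact ⟨y, hyC, hyx, by simpa [Metric.mem_ball] using hyU⟩
  have hsub : ∀ α, E (α + 1) ⊆ E α := fun α => by
    rw [hacc α]; exact inter_subset_left
  -- the family is antitone
  have hmono : ∀ β α, α ≤ β → E β ⊆ E α := by
    intro β
    induction β using Ordinal.induction with
    | h β IH =>
      intro α hαβ
      rcases eq_or_lt_of_le hαβ with rfl | hlt
      · exact subset_rfl
      rcases Ordinal.zero_or_succ_or_isSuccLimit β with h0 | ⟨γ, rfl⟩ | hβ
      · exact absurd h0 (by rintro rfl; exact ((show (0:Ordinal) ≤ α from zero_le).not_gt hlt))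
      · have hγ : γ < Order.succ γ := Order.lt_succ γ
        have hαγ : α ≤ γ := Order.lt_succ_iff.1 hlt
        have : E (Order.succ γ) ⊆ E γ := by
          rw [← Ordinal.add_one_eq_succ]; exact hsub γ
        exact this.trans (IH γ hγ α hαγ)
      · rw [hlim β hβ]
        exact iInter₂_subset α hlt
  -- each stage is closed
  have hclosed : ∀ α, IsClosed (E α) := by
    intro α
    induction α using Ordinal.induction with
    | h α IH =>
      rcases Ordinal.zero_or_succ_or_isSuccLimit α with h0 | ⟨γ, rfl⟩ | hα
      · rw [h0]; exact hcomp.isClosed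
      · rw [← Ordinal.add_one_eq_succ, hacc γ]
        have hγ : γ < Order.succ γ := Order.lt_succ γ
        exact (IH γ hγ).inter (isClosed_derivedSet _)
      · rw [hlim α hα]
        exact isClosed_biInter fun β hβ => IH β hβ
  have hcpt : ∀ α, IsCompact (E α) := fun α =>
    hcomp.of_isClosed_subset (hclosed α) (hmono α 0 (zero_le))
  -- some stage is empty
  have hempty : ∃ α, E α = ∅ := by
    by_contra hno
    push_neg at hno
    -- strict decrease at every stage
    have hstrict : ∀ α, E (α + 1) ≠ E α := by
      intro α heq
      have hperf : Perfect (E α) := by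
        refine ⟨hclosed α, fun x hx => ?_⟩
        have hx' : x ∈ E α ∩ derivedSet (E α) := by rw [← hacc α, heq]; exact hx
        exact hx'.2
      obtain ⟨f, hrange, -, hinj⟩ := hperf.exists_nat_bool_injection (hno α)
      have hcnt : (Set.range f).Countable :=
        hcount.mono (hrange.trans (hmono α 0 (zero_le)))
      have hcnt' : Countable (Set.range f) := hcnt.to_subtype
      have : Countable (ℕ → Bool) :=
        Countable.of_equiv _ (Equiv.ofInjective f hinj).symm
      have h1 : Cardinal.mk (ℕ → Bool) ≤ Cardinal.aleph0 := Cardinal.mk_le_aleph0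
      have h2 : Cardinal.mk (ℕ → Bool) = (2 : Cardinal) ^ Cardinal.aleph0 := by
        rw [← Cardinal.power_def, Cardinal.mk_bool, Cardinal.mk_nat]
      exact absurd (h2 ▸ h1) (Cardinal.cantor _).not_ge
    -- choose a point dropped at each stage
    have hdrop : ∀ α, (E α \ E (α + 1)).Nonempty := fun α =>
      diff_nonempty.2 fun hsubset => hstrict α ((hsub α).antisymm hsubset)
    choose x hx using hdrop
    have hxE0 : ∀ α, x α ∈ E 0 := fun α =>
      hmono α 0 (zero_le) (hx α).1
    have key : ∀ {α β : Ordinal}, α < β → x α ≠ x β := by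
      intro α β hlt hxx
      have hβα1 : E β ⊆ E (α + 1) := by
        apply hmono β (α + 1)
        rw [Ordinal.add_one_eq_succ]
        exact Order.succ_le_of_lt hlt
      exact (hx α).2 (hxx ▸ hβα1 (hx β).1)
    let g : Ordinal → E 0 := fun α => ⟨x α, hxE0 α⟩
    have hxinj : Function.Injective g := by
      intro α β hαβ
      have hxx : x α = x β := congrArg Subtype.val hαβ
      rcases lt_trichotomy α β with h | h | h
      · exact absurd hxx (key h)
      · exact h
      · exact absurd hxx.symm (key h)
    have hsmall : Small.{0} (E 0) := by
      have : Countable (E 0) := hcount.to_subtype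
      exact Countable.toSmall _
    exact not_small_ordinal (small_of_injective hxinj)
  -- take the least empty stage
  obtain ⟨α₀, hα₀, hminraw⟩ := Ordinal.lt_wf.has_min {α | E α = ∅} hempty
  have hmin : ∀ β < α₀, (E β).Nonempty := fun β hβ =>
    nonempty_iff_ne_empty.2 fun h => hminraw β h hβ
  -- α₀ is neither 0 nor a limit
  rcases Ordinal.zero_or_succ_or_isSuccLimit α₀ with h0 | ⟨γ, rfl⟩ | hα
  · rw [h0] at hα₀; exact absurd hα₀ (nonempty_iff_ne_empty.1 hne)
  · -- successor case: E γ is the desired stage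
    have hγlt : γ < Order.succ γ := Order.lt_succ γ
    have hEγ : (E γ).Nonempty := hmin γ hγlt
    have hEγ1 : E (γ + 1) = ∅ := by rw [Ordinal.add_one_eq_succ]; exact hα₀
    -- every point of E γ is isolated
    have hdisc : DiscreteTopology (E γ) := by
      rw [discreteTopology_subtype_iff]
      intro z hz
      have hz1 : z ∉ E (γ + 1) := by rw [hEγ1]; exact notMem_empty z
      rw [hsucc γ] at hz1
      simp only [mem_sep_iff, not_and, not_forall] at hz1
      obtain ⟨ε, εpos, hiso⟩ := hz1 hz
      push_neg at hiso
      rw [← Filter.empty_mem_iff_bot, Filter.mem_inf_principal]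
      refine mem_nhdsWithin.2 ⟨Metric.ball z ε, Metric.isOpen_ball,
        Metric.mem_ball_self εpos, fun y hy => ?_⟩
      intro hyE
      exact absurd (hiso y hyE (by simpa using hy.2)) (not_le.2 hy.1)
    refine ⟨γ, (hcpt γ).finite (isDiscrete_iff_discreteTopology.mpr hdisc), hEγ, hEγ1⟩
  · -- limit case is impossible: directed intersection of nonempty compacts
    exfalso
    have hpos : (0 : Ordinal) < α₀ := hα.pos
    have : Nonempty {β // β < α₀} := ⟨⟨0, hpos⟩⟩
    have hα₀' : E α₀ = ∅ := hα₀
    have hnonempty : (⋂ i : {β // β < α₀}, E i.1).Nonempty := by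
      apply IsCompact.nonempty_iInter_of_directed_nonempty_isCompact_isClosed
      · intro i j
        rcases le_total i.1 j.1 with h | h
        · exact ⟨j, hmono j.1 i.1 h, subset_rfl⟩
        · exact ⟨i, subset_rfl, hmono i.1 j.1 h⟩
      · exact fun i => hmin i.1 i.2
      · exact fun i => hcpt i.1
      · exact fun i => hclosed i.1
    obtain ⟨z, hz⟩ := hnonempty
    have hzα₀ : z ∈ E α₀ := by
      rw [hlim α₀ hα]
      exact mem_iInter₂.2 fun β hβ => mem_iInter.1 hz ⟨β, hβ⟩
    rw [hα₀'] at hzα₀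
    exact absurd hzα₀ (notMem_empty z)
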